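/- Let G be a finite simple graph, let S be an even kernel of G, and let v ∈ S. Then the undirected edge geography position (G, v) is a P-position. -/

import Mathlib

/-- P-positions of undirected edge geography on the edge set `F` with root `v`:
every move (removing an edge `s(v,w) ∈ F` and moving the root to `w`)
leads to a position that is not a P-position. -/
def UegPPos {V : Type} [DecidableEq V] (F : Finset (Sym2 V)) (v : V) : Prop :=
  ∀ w : V, ∀ h : s(v, w) ∈ F, ¬ UegPPos (F.erase s(v, w)) w
termination_by F.card
decreasing_by exact Finset.card_erase_lt_of_mem h

/-- N-positions of undirected edge geography: some move leads to a P-position. -/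
def UegNPos {V : Type} [DecidableEq V] (F : Finset (Sym2 V)) (v : V) : Prop :=
  ∃ w : V, ∃ _ : s(v, w) ∈ F, UegPPos (F.erase s(v, w)) w

/-- The grid graph `G_{m×n}`: the vertex `(i, j)` of the grid (with `1 ≤ i ≤ m`,
`1 ≤ j ≤ n`) is encoded as the pair `(⟨i-1, _⟩, ⟨j-1, _⟩) : Fin m × Fin n`;
two vertices `(i,j)` and `(i',j')` are adjacent iff `|i-i'| + |j-j'| = 1`. -/
def gridGraph (m n : ℕ) : SimpleGraph (Fin m × Fin n) where
  Adj p q := ((p.1.val : ℤ) - q.1.val).natAbs + ((p.2.val : ℤ) - q.2.val).natAbs = 1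
  symm := ⟨by intro p q h; omega⟩
  loopless := ⟨by intro p h; omega⟩

instance (m n : ℕ) : DecidableRel (gridGraph m n).Adj := fun p q =>
  inferInstanceAs
    (Decidable (((p.1.val : ℤ) - q.1.val).natAbs + ((p.2.val : ℤ) - q.2.val).natAbs = 1))

/-- An even kernel of a simple graph: a nonempty independent set `S` such that every
vertex not in `S` has an even number of neighbors in `S`. -/
def IsEvenKernel {V : Type} (G : SimpleGraph V) (S : Set V) : Prop :=
  S.Nonempty ∧ (∀ u ∈ S, ∀ w ∈ S, ¬ G.Adj u w) ∧
    ∀ u, u ∉ S → Even {w | w ∈ S ∧ G.Adj u w}.ncard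

lemma uegPPos_iff {V : Type} [DecidableEq V] (F : Finset (Sym2 V)) (v : V) :
    UegPPos F v ↔ ∀ w : V, ∀ _ : s(v, w) ∈ F, ¬ UegPPos (F.erase s(v, w)) w := by
  rw [UegPPos]

noncomputable def uegCnt {V : Type} (S : Set V) (u : V) (F : Finset (Sym2 V)) : ℕ :=
  {w | w ∈ S ∧ s(u, w) ∈ F}.ncard

lemma ueg_key {V : Type} [Fintype V] [DecidableEq V]
    (G : SimpleGraph V) [DecidableRel G.Adj] (S : Set V)
    (hind : ∀ u ∈ S, ∀ w ∈ S, ¬ G.Adj u w) :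
    ∀ F : Finset (Sym2 V), F ⊆ G.edgeFinset →
      ((∀ v ∈ S, (∀ u, u ∉ S → Even (uegCnt S u F)) → UegPPos F v) ∧
       (∀ w, w ∉ S → ¬ Even (uegCnt S w F) →
          (∀ u, u ∉ S → u ≠ w → Even (uegCnt S u F)) → ¬ UegPPos F w)) := by
  classical
  intro F
  induction F using Finset.strongInduction with
  | _ F IH =>
  intro hFsub
  have hadj : ∀ a b : V, s(a, b) ∈ F → G.Adj a b := by
    intro a b h
    have := hFsub h
    rwa [SimpleGraph.mem_edgeFinset, SimpleGraph.mem_edgeSet] at this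
  have cnt_other : ∀ x y u : V, x ∈ S → y ∉ S → u ∉ S → u ≠ y →
      uegCnt S u (F.erase s(x, y)) = uegCnt S u F := by
    intro x y u hx hy hu huy
    unfold uegCnt
    congr 1
    ext w
    simp only [Set.mem_setOf_eq, Finset.mem_erase]
    constructor
    · rintro ⟨hw, _, h2⟩; exact ⟨hw, h2⟩
    · rintro ⟨hw, h2⟩
      refine ⟨hw, ?_, h2⟩
      intro heq
      rw [Sym2.eq_iff] at heq
      rcases heq with ⟨h1, _⟩ | ⟨h1, _⟩
      · exact hu (h1 ▸ hx)
      · exact huy h1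
  have cnt_self : ∀ x y : V, x ∈ S → y ∉ S → s(x, y) ∈ F →
      uegCnt S y (F.erase s(x, y)) = uegCnt S y F - 1 := by
    intro x y hx hy hmem
    unfold uegCnt
    have hset : {w | w ∈ S ∧ s(y, w) ∈ F.erase s(x, y)}
        = {w | w ∈ S ∧ s(y, w) ∈ F} \ {x} := by
      ext w
      simp only [Set.mem_setOf_eq, Finset.mem_erase, Set.mem_diff, Set.mem_singleton_iff]
      constructor
      · rintro ⟨hw, hne, h2⟩
        refine ⟨⟨hw, h2⟩, ?_⟩
        intro heq
        exact hne (by rw [heq, Sym2.eq_swap])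
      · rintro ⟨⟨hw, h2⟩, hne⟩
        refine ⟨hw, ?_, h2⟩
        intro heq
        rw [Sym2.eq_iff] at heq
        rcases heq with ⟨h1, _⟩ | ⟨_, h2'⟩
        · exact hy (h1 ▸ hx)
        · exact hne h2'
    rw [hset]
    exact Set.ncard_diff_singleton_of_mem ⟨hx, by rwa [Sym2.eq_swap]⟩
  have cnt_pos : ∀ x y : V, x ∈ S → s(x, y) ∈ F → 0 < uegCnt S y F := by
    intro x y hx hmem
    refine Set.ncard_pos (Set.toFinite _) |>.mpr ⟨x, hx, by rwa [Sym2.eq_swap]⟩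
  constructor
  · -- P part
    intro v hvS hEven
    rw [uegPPos_iff]
    intro w hmem
    have hAdj := hadj v w hmem
    have hwS : w ∉ S := fun hwS => hind v hvS w hwS hAdj
    have hsub' : F.erase s(v, w) ⊆ G.edgeFinset :=
      (Finset.erase_subset _ _).trans hFsub
    have hlt : F.erase s(v, w) ⊂ F := Finset.erase_ssubset hmem
    refine (IH _ hlt hsub').2 w hwS ?_ ?_
    · rw [cnt_self v w hvS hwS hmem]
      have hpos := cnt_pos v w hvS hmem
      obtain ⟨k, hk⟩ := hEven w hwS
      rintro ⟨j, hj⟩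
      omega
    · intro u huS huw
      rw [cnt_other v w u hvS hwS huS huw]
      exact hEven u huS
  · -- N part
    intro w hwS hOdd hothers hP
    have hpos : 0 < uegCnt S w F := by
      rcases Nat.eq_zero_or_pos (uegCnt S w F) with h | h
      · exact absurd (h ▸ Even.zero) hOdd
      · exact h
    obtain ⟨v', hv'S, hv'mem⟩ := (Set.ncard_pos (Set.toFinite _)).mp hpos
    rw [uegPPos_iff] at hP
    refine hP v' hv'mem ?_
    have hmem' : s(v', w) ∈ F := by rwa [Sym2.eq_swap]
    have he : F.erase s(w, v') = F.erase s(v', w) := by rw [Sym2.eq_swap]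
    have hsub' : F.erase s(w, v') ⊆ G.edgeFinset :=
      (Finset.erase_subset _ _).trans hFsub
    have hlt : F.erase s(w, v') ⊂ F := Finset.erase_ssubset hv'mem
    refine (IH _ hlt hsub').1 v' hv'S ?_
    intro u huS
    by_cases huw : u = w
    · subst huw
      rw [he, cnt_self v' u hv'S huS hmem']
      obtain ⟨k, hk⟩ := Nat.not_even_iff_odd.mp hOdd
      exact ⟨k, by omega⟩
    · rw [he, cnt_other v' w u hv'S hwS huS huw]
      exact hothers u huS huw

/-- If `S` is an even kernel of a finite simple graph `G` and `v ∈ S`,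
then the UEG position `(G, v)` is a P-position. -/
theorem ueg_ppos_of_evenKernel {V : Type} [Fintype V] [DecidableEq V]
    (G : SimpleGraph V) [DecidableRel G.Adj] (S : Set V)
    (hS : IsEvenKernel G S) (v : V) (hv : v ∈ S) :
    UegPPos G.edgeFinset v := by
  obtain ⟨-, hind, hev⟩ := hS
  refine (ueg_key G S hind G.edgeFinset subset_rfl).1 v hv ?_
  intro u hu
  have : uegCnt S u G.edgeFinset = {w | w ∈ S ∧ G.Adj u w}.ncard := by
    unfold uegCnt
    congr 1
    ext w
    simp [SimpleGraph.mem_edgeFinset]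
  rw [this]
  exact hev u hu
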